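/- Let d ≥ 2 be an integer such that every P5-free graph G satisfies α(G)·ω(G)^d ≥ |G|. Then every nonempty P5-free graph G satisfies χ*(G) ≤ ω(G)^d. -/

import Mathlib

open SimpleGraph

/-- The five-vertex path `P₅`. -/
def P5 : SimpleGraph (Fin 5) := SimpleGraph.fromRel (fun i j => (i : ℕ) + 1 = (j : ℕ))

/-- A graph is `P₅`-free if it contains no induced copy of `P5`
(equivalently, no graph embedding of `P5`). -/
def P5Free {V : Type*} (G : SimpleGraph V) : Prop := IsEmpty (P5 ↪g G)

/-- A graph is `T`-free if it contains no induced copy of `T`. -/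
def TFree {W V : Type*} (T : SimpleGraph W) (G : SimpleGraph V) : Prop := IsEmpty (T ↪g G)

/-- A stable (independent) set of vertices. -/
def IsStableSet {V : Type*} (G : SimpleGraph V) (s : Finset V) : Prop :=
  ∀ ⦃u⦄, u ∈ s → ∀ ⦃v⦄, v ∈ s → ¬ G.Adj u v

/-- The stability number `α(G)`. -/
noncomputable def alphaNum {V : Type*} [Fintype V] (G : SimpleGraph V) : ℕ :=
  sSup {n | ∃ s : Finset V, IsStableSet G s ∧ s.card = n}

/-- The clique number `ω(G)`. -/
noncomputable def omegaNum {V : Type*} [Fintype V] (G : SimpleGraph V) : ℕ :=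
  sSup {n | ∃ s : Finset V, G.IsClique (s : Set V) ∧ s.card = n}

/-- `ψ(G) = |G| / α(G)` (and `0` for the null graph). -/
noncomputable def psi {V : Type*} [Fintype V] (G : SimpleGraph V) : ℝ :=
  if Fintype.card V = 0 then 0 else (Fintype.card V : ℝ) / (alphaNum G : ℝ)

/-- `ψ(S)` for a vertex subset `S`, i.e. `ψ(G[S])`. -/
noncomputable def psiSub {V : Type*} [Fintype V] (G : SimpleGraph V) (s : Finset V) : ℝ :=
  psi (G.induce (↑s : Set V))

/-- The Hall ratio `ρ(G)`: the maximum of `ψ(F)` over induced subgraphs `F` of `G`. -/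
noncomputable def rho {V : Type*} [Fintype V] (G : SimpleGraph V) : ℝ :=
  ⨆ s : Finset V, psiSub G s

/-- `ρ(S)` for a vertex subset `S`, i.e. `ρ(G[S])`. -/
noncomputable def rhoSub {V : Type*} [Fintype V] (G : SimpleGraph V) (s : Finset V) : ℝ :=
  rho (G.induce (↑s : Set V))

/-- `(A, B)` is a complete pair: disjoint, with every vertex of `A` adjacent to every
vertex of `B`. -/
def CompletePair {V : Type*} (G : SimpleGraph V) (A B : Finset V) : Prop :=
  Disjoint A B ∧ ∀ a ∈ A, ∀ b ∈ B, G.Adj a b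

/-- `(A, B)` is an anticomplete pair: disjoint, with no edges between `A` and `B`. -/
def AnticompletePair {V : Type*} (G : SimpleGraph V) (A B : Finset V) : Prop :=
  Disjoint A B ∧ ∀ a ∈ A, ∀ b ∈ B, ¬ G.Adj a b

/-- A complete blockade: pairwise disjoint sets, pairwise complete to each other. -/
def CompleteBlockade {V : Type*} (G : SimpleGraph V) {k : ℕ} (B : Fin k → Finset V) : Prop :=
  (∀ i j, i ≠ j → Disjoint (B i) (B j)) ∧
  (∀ i j, i ≠ j → ∀ a ∈ B i, ∀ b ∈ B j, G.Adj a b)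

/-- An anticomplete blockade: pairwise disjoint sets, pairwise anticomplete to each other. -/
def AnticompleteBlockade {V : Type*} (G : SimpleGraph V) {k : ℕ} (B : Fin k → Finset V) : Prop :=
  (∀ i j, i ≠ j → Disjoint (B i) (B j)) ∧
  (∀ i j, i ≠ j → ∀ a ∈ B i, ∀ b ∈ B j, ¬ G.Adj a b)

/-- The fractional chromatic number `χ*(G)`: the least `q ≥ 0` for which there are
nonnegative weights on the stable sets summing to `q` that cover every vertex with
total weight at least `1`. -/
noncomputable def fracChrom {V : Type*} [Fintype V] [DecidableEq V] (G : SimpleGraph V) : ℝ :=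
  sInf {q : ℝ | 0 ≤ q ∧ ∃ x : Finset V → ℝ,
    (∀ s, 0 ≤ x s) ∧ (∀ s, ¬ IsStableSet G s → x s = 0) ∧
    (∑ s : Finset V, x s) = q ∧
    ∀ v : V, 1 ≤ ∑ s ∈ Finset.univ.filter (fun s : Finset V => v ∈ s), x s}

/-- `G` is `ε`-sparse: every vertex has degree at most `ε·|G|`. -/
def EpsSparse {V : Type*} [Fintype V] (ε : ℝ) (G : SimpleGraph V) : Prop :=
  ∀ v : V, ((G.neighborSet v).ncard : ℝ) ≤ ε * (Fintype.card V : ℝ)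

/-- `G` is `(1-ε)`-dense: the complement of `G` is `ε`-sparse. -/
def OneSubEpsDense {V : Type*} [Fintype V] (ε : ℝ) (G : SimpleGraph V) : Prop :=
  EpsSparse ε Gᶜ

/-- `G` is `ε`-restricted: `ε`-sparse or `(1-ε)`-dense. -/
def EpsRestricted {V : Type*} [Fintype V] (ε : ℝ) (G : SimpleGraph V) : Prop :=
  EpsSparse ε G ∨ OneSubEpsDense ε G

/-- `G` is `(p,q)`-sparse: every induced subgraph `F` with `ρ(F) ≥ q` contains an
anticomplete pair `(X,Y)` with `ρ(X), ρ(Y) ≥ p`. -/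
def PQSparse {V : Type*} [Fintype V] (G : SimpleGraph V) (p q : ℝ) : Prop :=
  ∀ s : Finset V, q ≤ rhoSub G s →
    ∃ X Y : Finset V, X ⊆ s ∧ Y ⊆ s ∧ AnticompletePair G X Y ∧
      p ≤ rhoSub G X ∧ p ≤ rhoSub G Y

/-- `φ_s = ∏_{i=1}^{s} (1 - 2^{-2^{i+1}})` (so `φ_0 = 1`). -/
noncomputable def phi (s : ℕ) : ℝ :=
  ∏ i ∈ Finset.Icc 1 s, (1 - ((2:ℝ) ^ (2 ^ (i+1)))⁻¹)

/-- `φ_{r,s} = φ_s / φ_r`. -/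
noncomputable def phiRS (r s : ℕ) : ℝ := phi s / phi r


section Aux

lemma p5_no_twins : ∀ a b : Fin 5, a ≠ b → ¬ P5.Adj a b →
    ∃ k, ¬ (P5.Adj a k ↔ P5.Adj b k) := by
  simp only [P5, SimpleGraph.fromRel_adj]
  decide

variable {V : Type} [Fintype V]

/-- The blow-up of `G` with multiplicities `c`. -/
def Blowup (G : SimpleGraph V) (c : V → ℕ) : SimpleGraph (Σ v : V, Fin (c v)) where
  Adj a b := G.Adj a.1 b.1
  symm := ⟨fun a b h => G.adj_symm h⟩
  loopless := ⟨fun a h => G.irrefl h⟩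

lemma blowup_p5free (G : SimpleGraph V) (c : V → ℕ) (hG : P5Free G) :
    P5Free (Blowup G c) := by
  constructor
  intro e
  set f : Fin 5 → V := fun i => (e i).1 with hf
  have hadj : ∀ i j, P5.Adj i j ↔ G.Adj (f i) (f j) := by
    intro i j
    rw [← e.map_adj_iff]
    rfl
  have hinj : Function.Injective f := by
    intro i j hij
    by_contra hne
    have hnadj : ¬ P5.Adj i j := by
      rw [hadj]; rw [hij]; exact G.irrefl
    obtain ⟨k, hk⟩ := p5_no_twins i j hne hnadj
    exact hk (by rw [hadj, hadj, hij])
  exact hG.elim ⟨⟨f, hinj⟩, fun {i j} => (hadj i j).symm⟩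

lemma omega_blowup_le (G : SimpleGraph V) (c : V → ℕ) :
    omegaNum (Blowup G c) ≤ omegaNum G := by
  apply csSup_le_csSup
  · exact ⟨Fintype.card V, fun n ⟨s, _, hc⟩ => hc ▸ Finset.card_le_univ s⟩
  · exact ⟨0, ∅, by simp, Finset.card_empty⟩
  · rintro n ⟨s, hs, rfl⟩
    classical
    have hinj : Set.InjOn Sigma.fst (s : Set (Σ v : V, Fin (c v))) := by
      intro a ha b hb hab
      by_contra hne
      have hadj : G.Adj a.1 b.1 := hs ha hb hne
      rw [hab] at hadj
      exact G.irrefl hadj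
    refine ⟨s.image Sigma.fst, ?_, ?_⟩
    · intro x hx y hy hxy
      simp only [Finset.coe_image] at hx hy
      obtain ⟨a, ha, rfl⟩ := hx
      obtain ⟨b, hb, rfl⟩ := hy
      have hne : a ≠ b := fun h => hxy (by rw [h])
      exact hs ha hb hne
    · exact Finset.card_image_of_injOn hinj

lemma stable_blowup_project (G : SimpleGraph V) (c : V → ℕ)
    (s : Finset (Σ v : V, Fin (c v))) (hs : IsStableSet (Blowup G c) s) :
    ∃ S : Finset V, IsStableSet G S ∧ s.card ≤ ∑ v ∈ S, c v := by
  classical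
  refine ⟨s.image Sigma.fst, ?_, ?_⟩
  · intro u hu v hv hadj
    obtain ⟨a, ha, rfl⟩ := Finset.mem_image.1 hu
    obtain ⟨b, hb, rfl⟩ := Finset.mem_image.1 hv
    exact hs ha hb hadj
  · rw [Finset.card_eq_sum_card_fiberwise
      (f := Sigma.fst) (fun x hx => Finset.mem_image_of_mem _ hx)]
    apply Finset.sum_le_sum
    intro v _
    calc (s.filter fun a => a.1 = v).card
        ≤ (Finset.range (c v)).card := by
          apply Finset.card_le_card_of_injOn (fun a => (a.2 : ℕ))
          · rintro ⟨a1, a2⟩ ha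
            obtain ⟨-, rfl⟩ := Finset.mem_filter.1 ha
            exact Finset.mem_range.2 a2.2
          · rintro ⟨a1, a2⟩ ha ⟨b1, b2⟩ hb hval
            obtain ⟨-, h1⟩ := Finset.mem_filter.1 ha
            obtain ⟨-, h2⟩ := Finset.mem_filter.1 hb
            subst h1; subst h2
            simp only at hval
            exact Sigma.ext rfl (heq_of_eq (Fin.ext hval))
      _ = c v := Finset.card_range _

lemma key_nat (d : ℕ)
    (h : ∀ (W : Type) [Fintype W] (G : SimpleGraph W), P5Free G →
      Fintype.card W ≤ alphaNum G * omegaNum G ^ d)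
    (G : SimpleGraph V) (hG : P5Free G) (c : V → ℕ) :
    ∃ S : Finset V, IsStableSet G S ∧ ∑ v, c v ≤ (∑ v ∈ S, c v) * omegaNum G ^ d := by
  classical
  set H := Blowup G c with hH
  have hcard : Fintype.card (Σ v : V, Fin (c v)) = ∑ v, c v := by
    simp [Fintype.card_sigma]
  -- alphaNum H is attained
  have hne : (0 : ℕ) ∈ {n | ∃ s, IsStableSet H s ∧ s.card = n} :=
    ⟨∅, fun u hu => by simp at hu, Finset.card_empty⟩
  have hbdd : BddAbove {n | ∃ s, IsStableSet H s ∧ s.card = n} :=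
    ⟨Fintype.card (Σ v : V, Fin (c v)), fun n ⟨s, _, hc⟩ => hc ▸ Finset.card_le_univ s⟩
  obtain ⟨s, hs, hscard⟩ := Nat.sSup_mem ⟨0, hne⟩ hbdd
  obtain ⟨S, hSstable, hScard⟩ := stable_blowup_project G c s hs
  refine ⟨S, hSstable, ?_⟩
  have h1 := h _ H (blowup_p5free G c hG)
  rw [hcard] at h1
  calc ∑ v, c v ≤ alphaNum H * omegaNum H ^ d := h1
    _ ≤ (∑ v ∈ S, c v) * omegaNum G ^ d := by
        apply Nat.mul_le_mul
        · exact le_trans (le_of_eq hscard.symm) hScard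
        · exact Nat.pow_le_pow_left (omega_blowup_le G c) d

lemma key_real (d : ℕ)
    (h : ∀ (W : Type) [Fintype W] (G : SimpleGraph W), P5Free G →
      Fintype.card W ≤ alphaNum G * omegaNum G ^ d)
    (G : SimpleGraph V) (hG : P5Free G) (w : V → ℝ) (hw : ∀ v, 0 ≤ w v) :
    ∃ S : Finset V, IsStableSet G S ∧
      ∑ v, w v ≤ ((omegaNum G ^ d : ℕ) : ℝ) * ∑ v ∈ S, w v := by
  classical
  by_contra hcon
  push_neg at hcon
  set t : ℝ := ((omegaNum G ^ d : ℕ) : ℝ) with ht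
  have ht0 : 0 ≤ t := Nat.cast_nonneg _
  set F : Finset (Finset V) := Finset.univ.filter (fun s => IsStableSet G s) with hF
  have hFne : F.Nonempty :=
    ⟨∅, Finset.mem_filter.2 ⟨Finset.mem_univ _, fun u hu => by simp at hu⟩⟩
  obtain ⟨s0, hs0F, hmin⟩ :=
    F.exists_min_image (fun s => (∑ v, w v) - t * ∑ v ∈ s, w v) hFne
  set ε : ℝ := (∑ v, w v) - t * ∑ v ∈ s0, w v with hε
  have hs0 : IsStableSet G s0 := (Finset.mem_filter.1 hs0F).2
  have hε0 : 0 < ε := by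
    have := hcon s0 hs0
    simp only [hε]
    linarith
  obtain ⟨N, hN⟩ := exists_nat_gt ((t * (Fintype.card V : ℝ)) / ε)
  have hNε : t * (Fintype.card V : ℝ) < N * ε := by
    rw [div_lt_iff₀ hε0] at hN
    linarith
  set c : V → ℕ := fun v => ⌈(N : ℝ) * w v⌉₊ with hc
  obtain ⟨S, hS, hcount⟩ := key_nat d h G hG c
  have hSF : S ∈ F := Finset.mem_filter.2 ⟨Finset.mem_univ _, hS⟩
  have hSmin : ε ≤ (∑ v, w v) - t * ∑ v ∈ S, w v := hmin S hSF
  -- cast the nat inequality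
  have hcast : ((∑ v, c v : ℕ) : ℝ) ≤ ((∑ v ∈ S, c v : ℕ) : ℝ) * t := by
    rw [ht]
    exact_mod_cast hcount
  have hlow : (N : ℝ) * ∑ v, w v ≤ ((∑ v, c v : ℕ) : ℝ) := by
    push_cast
    rw [Finset.mul_sum]
    exact Finset.sum_le_sum fun v _ => Nat.le_ceil _
  have hup : ((∑ v ∈ S, c v : ℕ) : ℝ) ≤ (N : ℝ) * (∑ v ∈ S, w v) + (Fintype.card V : ℝ) := by
    push_cast
    have : ∀ v ∈ S, ((c v : ℕ) : ℝ) ≤ (N : ℝ) * w v + 1 := by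
      intro v _
      exact le_of_lt (Nat.ceil_lt_add_one (mul_nonneg (Nat.cast_nonneg N) (hw v)))
    calc (∑ v ∈ S, ((c v : ℕ) : ℝ)) ≤ ∑ v ∈ S, ((N : ℝ) * w v + 1) :=
          Finset.sum_le_sum this
      _ = (N : ℝ) * (∑ v ∈ S, w v) + S.card := by
          rw [Finset.sum_add_distrib, Finset.mul_sum]; simp
      _ ≤ (N : ℝ) * (∑ v ∈ S, w v) + (Fintype.card V : ℝ) := by
          have : (S.card : ℝ) ≤ (Fintype.card V : ℝ) := by
            exact_mod_cast Finset.card_le_univ S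
          linarith
  have hmul : (N : ℝ) * (t * ∑ v ∈ S, w v) ≤ (N : ℝ) * ((∑ v, w v) - ε) := by
    apply mul_le_mul_of_nonneg_left _ (Nat.cast_nonneg N)
    linarith
  nlinarith [hlow, hcast, hup, hmul, hNε, ht0]

end Aux

/-- If `d ≥ 2` is such that every `P₅`-free graph `G` satisfies
`α(G)·ω(G)^d ≥ |G|`, then every nonempty `P₅`-free graph `G` satisfies `χ*(G) ≤ ω(G)^d`. -/
theorem stmt_2 (d : ℕ) (hd : 2 ≤ d)
    (h : ∀ (V : Type) [Fintype V] (G : SimpleGraph V), P5Free G →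
      Fintype.card V ≤ alphaNum G * omegaNum G ^ d) :
    ∀ (V : Type) [Fintype V] [DecidableEq V] (G : SimpleGraph V), Nonempty V → P5Free G →
      fracChrom G ≤ (omegaNum G : ℝ) ^ d := by
  intro V _ _ G _ hG
  classical
  set t : ℝ := ((omegaNum G ^ d : ℕ) : ℝ) with htdef
  have ht0 : 0 ≤ t := Nat.cast_nonneg _
  have hgoal : ((omegaNum G : ℝ)) ^ d = t := by push_cast [htdef]; ring
  -- the linear "coverage" map
  set covL : (Finset V → ℝ) →ₗ[ℝ] (V → ℝ) :=
    { toFun := fun x v => ∑ s ∈ Finset.univ.filter (fun s : Finset V => v ∈ s), x s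
      map_add' := fun x y => by funext v; simp [Finset.sum_add_distrib]
      map_smul' := fun r x => by funext v; simp [Finset.mul_sum] } with hcovL
  set Δ : Set (Finset V → ℝ) :=
    {x | (∀ s, 0 ≤ x s) ∧ (∀ s, ¬ IsStableSet G s → x s = 0) ∧ ∑ s, x s ≤ t} with hΔ
  set Q : Set (V → ℝ) := {y | ∀ v, 1 ≤ y v} with hQ
  by_cases hDQ : ∃ x ∈ Δ, covL x ∈ Q
  · obtain ⟨x, ⟨hx0, hxs, hxt⟩, hxQ⟩ := hDQ
    have hmem : (∑ s, x s) ∈ {q : ℝ | 0 ≤ q ∧ ∃ x : Finset V → ℝ,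
        (∀ s, 0 ≤ x s) ∧ (∀ s, ¬ IsStableSet G s → x s = 0) ∧
        (∑ s : Finset V, x s) = q ∧
        ∀ v : V, 1 ≤ ∑ s ∈ Finset.univ.filter (fun s : Finset V => v ∈ s), x s} :=
      ⟨Finset.sum_nonneg fun s _ => hx0 s, x, hx0, hxs, rfl, fun v => hxQ v⟩
    have hbb : BddBelow {q : ℝ | 0 ≤ q ∧ ∃ x : Finset V → ℝ,
        (∀ s, 0 ≤ x s) ∧ (∀ s, ¬ IsStableSet G s → x s = 0) ∧
        (∑ s : Finset V, x s) = q ∧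
        ∀ v : V, 1 ≤ ∑ s ∈ Finset.univ.filter (fun s : Finset V => v ∈ s), x s} :=
      ⟨0, fun q hq => hq.1⟩
    rw [hgoal]
    calc fracChrom G ≤ ∑ s, x s := csInf_le hbb hmem
      _ ≤ t := hxt
  · exfalso
    -- Δ is convex and compact
    have hΔconv : Convex ℝ Δ := by
      rintro x ⟨hx0, hxs, hxt⟩ y ⟨hy0, hys, hyt⟩ a b ha hb hab
      refine ⟨fun s => add_nonneg (mul_nonneg ha (hx0 s)) (mul_nonneg hb (hy0 s)),
        fun s hs => by simp [Pi.add_apply, Pi.smul_apply, hxs s hs, hys s hs], ?_⟩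
      simp only [Pi.add_apply, Pi.smul_apply, smul_eq_mul]
      rw [Finset.sum_add_distrib, ← Finset.mul_sum, ← Finset.mul_sum]
      nlinarith [hxt, hyt]
    have hΔclosed : IsClosed Δ := by
      have h1 : IsClosed {x : Finset V → ℝ | ∀ s, 0 ≤ x s} := by
        have he : {x : Finset V → ℝ | ∀ s, 0 ≤ x s} = ⋂ s, {x | 0 ≤ x s} := by
          ext x; simp
        rw [he]
        exact isClosed_iInter fun s => isClosed_le continuous_const (continuous_apply s)
      have h2 : IsClosed {x : Finset V → ℝ | ∀ s, ¬ IsStableSet G s → x s = 0} := by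
        have he : {x : Finset V → ℝ | ∀ s, ¬ IsStableSet G s → x s = 0}
            = ⋂ s, {x | ¬ IsStableSet G s → x s = 0} := by
          ext x; simp
        rw [he]
        refine isClosed_iInter fun s => ?_
        by_cases hst : IsStableSet G s
        · have : {x : Finset V → ℝ | ¬ IsStableSet G s → x s = 0} = Set.univ := by
            ext x; simp [hst]
          rw [this]; exact isClosed_univ
        · have : {x : Finset V → ℝ | ¬ IsStableSet G s → x s = 0} = {x | x s = 0} := by
            ext x; simp [hst]
          rw [this]
          exact isClosed_eq (continuous_apply s) continuous_const
      have h3 : IsClosed {x : Finset V → ℝ | ∑ s, x s ≤ t} :=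
        isClosed_le (continuous_finset_sum _ fun s _ => continuous_apply s) continuous_const
      have : Δ = {x : Finset V → ℝ | ∀ s, 0 ≤ x s} ∩
          ({x | ∀ s, ¬ IsStableSet G s → x s = 0} ∩ {x | ∑ s, x s ≤ t}) := by
        ext x
        simp only [hΔ, Set.mem_setOf_eq, Set.mem_inter_iff]
      rw [this]
      exact h1.inter (h2.inter h3)
    have hΔcomp : IsCompact Δ := by
      apply IsCompact.of_isClosed_subset
        (isCompact_univ_pi fun _ : Finset V => isCompact_Icc (a := (0:ℝ)) (b := t))
        hΔclosed
      rintro x ⟨hx0, hxs, hxt⟩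
      intro s _
      refine ⟨hx0 s, ?_⟩
      calc x s ≤ ∑ s', x s' :=
            Finset.single_le_sum (fun s' _ => hx0 s') (Finset.mem_univ s)
        _ ≤ t := hxt
    have hDcomp : IsCompact (covL '' Δ) := hΔcomp.image covL.continuous_of_finiteDimensional
    have hDconv : Convex ℝ (covL '' Δ) := hΔconv.linear_image covL
    have hQconv : Convex ℝ Q := by
      rintro y hy z hz a b ha hb hab v
      have h1 := hy v
      have h2 := hz v
      simp only [Pi.add_apply, Pi.smul_apply, smul_eq_mul]
      nlinarith
    have hQclosed : IsClosed Q := by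
      have : Q = ⋂ v, {y : V → ℝ | 1 ≤ y v} := by ext y; simp [hQ]
      rw [this]
      exact isClosed_iInter fun v => isClosed_le continuous_const (continuous_apply v)
    have hdisj : Disjoint (covL '' Δ) Q := by
      rw [Set.disjoint_left]
      rintro y ⟨x, hx, rfl⟩ hyQ
      exact hDQ ⟨x, hx, hyQ⟩
    obtain ⟨f, u, v, hfD, huv, hfQ⟩ :=
      geometric_hahn_banach_compact_closed hDconv hDcomp hQconv hQclosed hdisj
    set w : V → ℝ := fun a => f ((Pi.single a 1 : V → ℝ)) with hwdef
    have hfeq : ∀ y : V → ℝ, f y = ∑ a, y a * w a := by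
      intro y
      have hy : y = ∑ a, y a • (Pi.single a 1 : V → ℝ) := by
        funext j
        simp [Pi.single_apply, Finset.sum_apply, mul_ite, Finset.sum_ite_eq']
      conv_lhs => rw [hy]
      rw [map_sum]
      simp [smul_eq_mul, hwdef]
    set one : V → ℝ := fun _ => 1 with honedef
    have honeQ : one ∈ Q := fun v => le_refl 1
    have hw0 : ∀ a, 0 ≤ w a := by
      intro a0
      by_contra hneg
      push_neg at hneg
      set lam : ℝ := max 0 ((v - f one) / w a0 + 1) with hlam
      have hlam0 : 0 ≤ lam := le_max_left _ _
      have hlamgt : (v - f one) / w a0 < lam :=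
        lt_of_lt_of_le (lt_add_one _) (le_max_right _ _)
      set b : V → ℝ := one + lam • (Pi.single a0 1 : V → ℝ) with hbdef
      have hbQ : b ∈ Q := by
        intro j
        simp only [hbdef, Pi.add_apply, Pi.smul_apply, smul_eq_mul, honedef]
        have : (0:ℝ) ≤ (Pi.single a0 1 : V → ℝ) j := by
          rcases eq_or_ne j a0 with rfl | hne
          · simp
          · simp [Pi.single_apply, hne]
        nlinarith
      have hfb : f b = f one + lam * w a0 := by
        simp only [hbdef, map_add, map_smul, smul_eq_mul, hwdef]
      have : lam * w a0 < v - f one := by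
        rw [div_lt_iff_of_neg hneg] at hlamgt
        linarith
      have hvb := hfQ b hbQ
      rw [hfb] at hvb
      linarith
    have hone : v < ∑ a, w a := by
      have := hfQ one honeQ
      rw [hfeq one] at this
      simpa [honedef] using this
    have hstab : ∀ S : Finset V, IsStableSet G S → t * ∑ a ∈ S, w a < u := by
      intro S hS
      set xS : Finset V → ℝ := fun s => if s = S then t else 0 with hxS
      have hxΔ : xS ∈ Δ := by
        refine ⟨fun s => ?_, fun s hs => ?_, ?_⟩
        · show (0:ℝ) ≤ if s = S then t else 0
          split <;> simp [ht0]
        · show (if s = S then t else 0) = 0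
          split
          · rename_i hsS; exact absurd (hsS ▸ hS) hs
          · rfl
        · simp only [hxS, Finset.sum_ite_eq' Finset.univ S, Finset.mem_univ, if_true, le_refl]
      have hcov : covL xS = fun a => if a ∈ S then t else 0 := by
        funext a
        show ∑ s ∈ Finset.univ.filter (fun s : Finset V => a ∈ s), xS s = _
        simp only [hxS, Finset.sum_ite_eq', Finset.mem_filter, Finset.mem_univ, true_and]
      have hlt := hfD _ ⟨xS, hxΔ, rfl⟩
      rw [hfeq, hcov] at hlt
      have he : ∑ a, (if a ∈ S then t else 0) * w a = t * ∑ a ∈ S, w a := by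
        simp only [ite_mul, zero_mul]
        rw [Finset.sum_ite_mem, Finset.univ_inter, Finset.mul_sum]
      rwa [he] at hlt
    obtain ⟨S, hSstable, hineq⟩ := key_real d h G hG w hw0
    rw [← htdef] at hineq
    have h1 := hstab S hSstable
    linarith
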